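/- Let (M, Ω) be a measurable space, H a separable Hilbert space, and (V_j : M → H)_{j∈ℕ} a sequence of measurable functions. For each x ∈ M and n ∈ ℕ let E_n(x) = span{V_1(x), …, V_n(x)}. Then for every measurable Y : M → H there exist measurable functions a_1, …, a_n : M → 𝕂 such that for every x ∈ M, the orthogonal projection of Y(x) onto E_n(x) equals Σ_{j=1}^n a_j(x) V_j(x). In particular, x ↦ proj_{E_n(x)} Y(x) is measurable. -/

import Mathlib

open scoped InnerProductSpace

/-- The span of the range of a function on a finite type is finite-dimensional
(recorded as an instance so that orthogonal projections onto such spans elaborate). -/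
instance spanRangeFiniteDimensional {K V : Type*} [DivisionRing K] [AddCommGroup V]
    [Module K V] {ι : Type*} [Finite ι] (f : ι → V) :
    FiniteDimensional K (Submodule.span K (Set.range f)) :=
  FiniteDimensional.span_of_finite K (Set.finite_range f)

set_option linter.unusedSectionVars false
set_option synthInstance.maxHeartbeats 1000000
set_option maxHeartbeats 1000000

section Aux

open Finset

variable (𝕜 : Type*) [RCLike 𝕜] {H : Type*} [NormedAddCommGroup H]
    [InnerProductSpace 𝕜 H] [CompleteSpace H] [SecondCountableTopology H]
    [MeasurableSpace H] [BorelSpace H]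
    {M : Type*} [MeasurableSpace M]

local notation "⟪" x ", " y "⟫" => @inner 𝕜 _ _ x y

noncomputable def gsAux (V : ℕ → M → H) (j : ℕ) (x : M) : H :=
  InnerProductSpace.gramSchmidt 𝕜 (fun i => V i x) j

noncomputable def cAux (V : ℕ → M → H) (j : ℕ) (Z : M → H) (x : M) : 𝕜 :=
  ⟪gsAux 𝕜 V j x, Z x⟫ / ((‖gsAux 𝕜 V j x‖ ^ 2 : ℝ) : 𝕜)

noncomputable def coefAux (V : ℕ → M → H) (j i : ℕ) (x : M) : 𝕜 :=
  (if i = j then 1 else 0) -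
    ∑ k : Fin j, cAux 𝕜 V k (V j) x * coefAux V k i x
termination_by j
decreasing_by exact k.2

theorem coefAux_eq (V : ℕ → M → H) (j i : ℕ) (x : M) :
    coefAux 𝕜 V j i x = (if i = j then 1 else 0) -
      ∑ k ∈ Finset.range j, cAux 𝕜 V k (V j) x * coefAux 𝕜 V k i x := by
  rw [coefAux, Fin.sum_univ_eq_sum_range (fun k => cAux 𝕜 V k (V j) x * coefAux 𝕜 V k i x)]

theorem coefAux_eq_zero (V : ℕ → M → H) {j i : ℕ} (h : j < i) (x : M) :
    coefAux 𝕜 V j i x = 0 := by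
  induction j using Nat.strong_induction_on with
  | _ j ih =>
    rw [coefAux_eq]
    rw [if_neg (by omega)]
    rw [Finset.sum_congr rfl fun k hk => by
      rw [ih k (Finset.mem_range.mp hk) (lt_trans (Finset.mem_range.mp hk) h), mul_zero]]
    simp

theorem measurable_gsAux (V : ℕ → M → H) (hV : ∀ j, Measurable (V j)) (j : ℕ) :
    Measurable (gsAux 𝕜 V j) := by
  induction j using Nat.strong_induction_on with
  | _ j ih =>
    have : (gsAux 𝕜 V j) = fun x =>
        V j x - ∑ i ∈ Finset.Iio j, cAux 𝕜 V i (V j) x • gsAux 𝕜 V i x := by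
      funext x
      simp only [gsAux, cAux]
      rw [InnerProductSpace.gramSchmidt_def]
      congr 1
      refine Finset.sum_congr rfl fun i _ => ?_
      rw [Submodule.starProjection_singleton, RCLike.ofReal_pow]
    rw [this]
    refine (hV j).sub (Finset.measurable_sum _ fun i hi => ?_)
    have hgi : Measurable (gsAux 𝕜 V i) := ih i (Finset.mem_Iio.mp hi)
    have hc : Measurable (cAux 𝕜 V i (V j)) := by
      unfold cAux
      exact (hgi.inner (hV j)).div
        ((RCLike.measurable_ofReal.comp ((hgi.norm).pow measurable_const)))
    exact hc.smul hgi

theorem measurable_cAux (V : ℕ → M → H) (hV : ∀ j, Measurable (V j)) (j : ℕ)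
    (Z : M → H) (hZ : Measurable Z) : Measurable (cAux 𝕜 V j Z) := by
  unfold cAux
  exact ((measurable_gsAux 𝕜 V hV j).inner hZ).div
    ((RCLike.measurable_ofReal.comp (((measurable_gsAux 𝕜 V hV j).norm).pow measurable_const)))

theorem measurable_coefAux (V : ℕ → M → H) (hV : ∀ j, Measurable (V j)) (j i : ℕ) :
    Measurable (coefAux 𝕜 V j i) := by
  induction j using Nat.strong_induction_on with
  | _ j ih =>
    have : coefAux 𝕜 V j i = fun x => (if i = j then 1 else 0) -
        ∑ k ∈ Finset.range j, cAux 𝕜 V k (V j) x * coefAux 𝕜 V k i x := by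
      funext x; exact coefAux_eq 𝕜 V j i x
    rw [this]
    exact measurable_const.sub (Finset.measurable_sum _ fun k hk =>
      (measurable_cAux 𝕜 V hV k (V j) (hV j)).mul (ih k (Finset.mem_range.mp hk)))

theorem gsAux_eq_sum (V : ℕ → M → H) (j : ℕ) (x : M) :
    gsAux 𝕜 V j x = ∑ i ∈ Finset.range (j + 1), coefAux 𝕜 V j i x • V i x := by
  induction j using Nat.strong_induction_on with
  | _ j ih =>
    have hdef : gsAux 𝕜 V j x = V j x -
        ∑ k ∈ Finset.range j, cAux 𝕜 V k (V j) x • gsAux 𝕜 V k x := by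
      simp only [gsAux, cAux]
      rw [InnerProductSpace.gramSchmidt_def]
      rw [Nat.Iio_eq_range]
      congr 1
      refine Finset.sum_congr rfl fun i _ => ?_
      rw [Submodule.starProjection_singleton, RCLike.ofReal_pow]
    rw [hdef]
    -- expand each gsAux k using ih, extended to range (j+1) via coefAux_eq_zero
    have hk_ext : ∀ k ∈ Finset.range j, gsAux 𝕜 V k x
        = ∑ i ∈ Finset.range (j + 1), coefAux 𝕜 V k i x • V i x := by
      intro k hk
      have hk' := Finset.mem_range.mp hk
      rw [ih k hk']
      refine Finset.sum_subset (Finset.range_subset_range.mpr (by omega)) ?_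
      intro i hi hni
      have h1 : i < j + 1 := Finset.mem_range.mp hi
      have h2 : ¬ i < k + 1 := fun h => hni (Finset.mem_range.mpr h)
      rw [coefAux_eq_zero 𝕜 V (by omega) x, zero_smul]
    calc V j x - ∑ k ∈ Finset.range j, cAux 𝕜 V k (V j) x • gsAux 𝕜 V k x
        = V j x - ∑ i ∈ Finset.range (j + 1),
            (∑ k ∈ Finset.range j, cAux 𝕜 V k (V j) x * coefAux 𝕜 V k i x) • V i x := by
          rw [Finset.sum_congr rfl fun k hk => by rw [hk_ext k hk]]
          congr 1
          simp_rw [Finset.smul_sum, smul_smul]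
          rw [Finset.sum_comm]
          simp_rw [Finset.sum_smul]
      _ = ∑ i ∈ Finset.range (j + 1), coefAux 𝕜 V j i x • V i x := by
          simp_rw [coefAux_eq 𝕜 V j _ x, sub_smul, Finset.sum_sub_distrib, ite_smul, one_smul,
            zero_smul]
          rw [Finset.sum_ite_eq' (Finset.range (j+1)) j (fun i => V i x)]
          rw [if_pos (Finset.self_mem_range_succ j)]

theorem proj_eq_sum (V : ℕ → M → H) (n : ℕ) (Y : M → H) (x : M) :
    ((Submodule.orthogonalProjection (Submodule.span 𝕜 (Set.range fun j : Fin n => V j x)) (Y x) : H))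
      = ∑ k ∈ Finset.range n, cAux 𝕜 V k Y x • gsAux 𝕜 V k x := by
  set f : ℕ → H := fun i => V i x with hf
  have hrange : (Set.range fun j : Fin n => V j x) = f '' Set.Iio n := by
    ext y
    constructor
    · rintro ⟨j, rfl⟩; exact ⟨(j : ℕ), j.2, rfl⟩
    · rintro ⟨i, hi, rfl⟩; exact ⟨⟨i, hi⟩, rfl⟩
  have hK : Submodule.span 𝕜 (Set.range fun j : Fin n => V j x)
      = Submodule.span 𝕜 (f '' Set.Iio n) := by rw [hrange]
  have hgs : ∀ k, gsAux 𝕜 V k x = InnerProductSpace.gramSchmidt 𝕜 f k := fun k => rfl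
  apply Submodule.eq_starProjection_of_mem_of_inner_eq_zero
  · rw [hK]
    refine Submodule.sum_mem _ fun k hk => Submodule.smul_mem _ _ ?_
    have hk' : k < n := Finset.mem_range.mp hk
    rw [hgs]
    exact Submodule.span_mono (Set.image_mono (Set.Iic_subset_Iio.mpr hk'))
      (InnerProductSpace.gramSchmidt_mem_span 𝕜 f le_rfl)
  · rw [hK, ← InnerProductSpace.span_gramSchmidt_Iio 𝕜 f n]
    intro w hw
    induction hw using Submodule.span_induction with
    | zero => exact inner_zero_right _
    | add u v hu hv hpu hpv => rw [inner_add_right, hpu, hpv, add_zero]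
    | smul c u hu hpu => rw [inner_smul_right, hpu, mul_zero]
    | mem u hu =>
      obtain ⟨i, hi, rfl⟩ := hu
      have hi' : i < n := hi
      rw [inner_sub_left, sum_inner]
      rw [Finset.sum_eq_single i ?h1 ?h2]
      · rw [inner_smul_left, hgs, inner_self_eq_norm_sq_to_K]
        by_cases h0 : InnerProductSpace.gramSchmidt 𝕜 f i = 0
        · simp [h0]
        · have hn0 : ((‖InnerProductSpace.gramSchmidt 𝕜 f i‖ : ℝ) ^ 2 : 𝕜) ≠ 0 := by
            simp only [ne_eq, RCLike.ofReal_pow]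
            exact pow_ne_zero 2 (by
              simpa [RCLike.ofReal_eq_zero] using (norm_ne_zero_iff.mpr h0))
          rw [cAux, hgs]
          rw [map_div₀, inner_conj_symm, RCLike.conj_ofReal]
          rw [RCLike.ofReal_pow] at *
          rw [div_mul_cancel₀ _ hn0, sub_self]
      · intro k hk hki
        rw [inner_smul_left, hgs k, InnerProductSpace.gramSchmidt_orthogonal 𝕜 f hki, mul_zero]
      · intro hni
        exact absurd (Finset.mem_range.mpr hi') hni

theorem gsAux_eq_sum' (V : ℕ → M → H) {k n : ℕ} (h : k < n) (x : M) :
    gsAux 𝕜 V k x = ∑ i ∈ Finset.range n, coefAux 𝕜 V k i x • V i x := by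
  rw [gsAux_eq_sum]
  refine Finset.sum_subset (Finset.range_subset_range.mpr (by omega)) ?_
  intro i hi hni
  have h1 : i < n := Finset.mem_range.mp hi
  have h2 : ¬ i < k + 1 := fun h => hni (Finset.mem_range.mpr h)
  rw [coefAux_eq_zero 𝕜 V (by omega) x, zero_smul]

end Aux

/-- The orthogonal projection onto the span of finitely many measurable vector fields,
applied to a measurable function, is given by measurable coefficients, and is measurable. -/
theorem stmt_1 {𝕜 : Type*} [RCLike 𝕜] {H : Type*} [NormedAddCommGroup H]
    [InnerProductSpace 𝕜 H] [CompleteSpace H] [SecondCountableTopology H]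
    [MeasurableSpace H] [BorelSpace H]
    {M : Type*} [MeasurableSpace M] (V : ℕ → M → H) (hV : ∀ j, Measurable (V j))
    (n : ℕ) (Y : M → H) (hY : Measurable Y) :
    (∃ a : Fin n → M → 𝕜, (∀ j, Measurable (a j)) ∧
      ∀ x : M,
        ((Submodule.orthogonalProjection (Submodule.span 𝕜 (Set.range fun j : Fin n => V j x)) (Y x) : H)
          = ∑ j : Fin n, a j x • V j x)) ∧
    Measurable fun x : M =>
      (Submodule.orthogonalProjection (Submodule.span 𝕜 (Set.range fun j : Fin n => V j x)) (Y x) : H) := by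
  have key : ∀ x : M,
      ((Submodule.orthogonalProjection (Submodule.span 𝕜 (Set.range fun j : Fin n => V j x)) (Y x) : H))
        = ∑ k ∈ Finset.range n, cAux 𝕜 V k Y x • gsAux 𝕜 V k x := proj_eq_sum 𝕜 V n Y
  constructor
  · refine ⟨fun j x => ∑ k ∈ Finset.range n, cAux 𝕜 V k Y x * coefAux 𝕜 V k (j : ℕ) x,
      fun j => ?_, fun x => ?_⟩
    · exact Finset.measurable_sum _ fun k _ =>
        (measurable_cAux 𝕜 V hV k Y hY).mul (measurable_coefAux 𝕜 V hV k j)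
    · rw [key x]
      rw [Fin.sum_univ_eq_sum_range
        (fun j => (∑ k ∈ Finset.range n, cAux 𝕜 V k Y x * coefAux 𝕜 V k j x) • V j x) n]
      rw [Finset.sum_congr rfl fun k hk => by
        rw [gsAux_eq_sum' 𝕜 V (Finset.mem_range.mp hk) x]]
      simp_rw [Finset.smul_sum, smul_smul]
      rw [Finset.sum_comm]
      simp_rw [Finset.sum_smul]
  · have : (fun x : M =>
        ((Submodule.orthogonalProjection (Submodule.span 𝕜 (Set.range fun j : Fin n => V j x)) (Y x) : H)))
        = fun x => ∑ k ∈ Finset.range n, cAux 𝕜 V k Y x • gsAux 𝕜 V k x := funext key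
    rw [this]
    exact Finset.measurable_sum _ fun k _ =>
      (measurable_cAux 𝕜 V hV k Y hY).smul (measurable_gsAux 𝕜 V hV k)
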